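/- Let G be a connected bipartite graph with bipartition (A,B) and let k ≥ 0 be an integer. Then G is k-extendable (every matching of size at most k extends to a perfect matching) if and only if |A| = |B| and for every nonempty subset X of A, either |N_G(X)| ≥ |X| + k or N_G(X) = B. -/

import Mathlib

open SimpleGraph

universe u v

variable {V : Type u} {W : Type v}

/-- `(A, B)` is a bipartition of the simple graph `G`. -/
def IsBipartition (G : SimpleGraph V) (A B : Set V) : Prop :=
  Disjoint A B ∧ A ∪ B = Set.univ ∧
    ∀ ⦃u v⦄, G.Adj u v → ((u ∈ A ∧ v ∈ B) ∨ (u ∈ B ∧ v ∈ A))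

/-- `G` is `k`-extendable: every matching with at most `k` edges extends
to a perfect matching. -/
def KExtendable (G : SimpleGraph V) (k : ℕ) : Prop :=
  ∀ M : G.Subgraph, M.IsMatching → M.edgeSet.ncard ≤ k →
    ∃ P : G.Subgraph, M ≤ P ∧ P.IsPerfectMatching

/-- A brace is a `2`-extendable bipartite graph. -/
def IsBrace (G : SimpleGraph V) : Prop :=
  (∃ A B, IsBipartition G A B) ∧ KExtendable G 2

/-- `G` has a matching whose vertex set is exactly `S`
(i.e. the subgraph of `G` induced on `S` has a perfect matching). -/
def HasPMOn (G : SimpleGraph V) (S : Set V) : Prop :=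
  ∃ M : G.Subgraph, M.IsMatching ∧ M.verts = S

/-- An orientation of a simple graph: each edge gets exactly one direction. -/
structure GraphOrientation (G : SimpleGraph V) where
  dir : V → V → Prop
  asymm : ∀ u v, dir u v → ¬ dir v u
  adj_iff : ∀ u v, G.Adj u v ↔ (dir u v ∨ dir v u)

open scoped Classical in
/-- The number of edges of the walk `w` traversed in agreement with the
orientation `o`. -/
noncomputable def forwardCount {G : SimpleGraph V} (o : GraphOrientation G) {u v : V}
    (w : G.Walk u v) : ℕ :=
  w.darts.countP fun d => decide (o.dir d.fst d.snd)

/-- `o` is a Pfaffian orientation of `G`: every central even circuit is oddly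
oriented.  (For an even circuit, being oddly oriented with respect to one
traversal direction is equivalent to being oddly oriented with respect to the
other.) -/
def IsPfaffian (G : SimpleGraph V) (o : GraphOrientation G) : Prop :=
  ∀ (v : V) (c : G.Walk v v), c.IsCycle → Even c.length →
    HasPMOn G {x | x ∉ c.support} → Odd (forwardCount o c)

/-- The neighborhood of a vertex set: vertices outside `X` adjacent to `X`. -/
def nbdSet (G : SimpleGraph V) (X : Set V) : Set V :=
  {v | v ∉ X ∧ ∃ x ∈ X, G.Adj x v}

/-- Restriction of `G` to the vertex set `T`, kept on the same vertex type. -/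
def restrictG (G : SimpleGraph V) (T : Set V) : SimpleGraph V where
  Adj x y := G.Adj x y ∧ x ∈ T ∧ y ∈ T
  symm := ⟨fun x y ⟨h, hx, hy⟩ => ⟨h.symm, hy, hx⟩⟩
  loopless := ⟨fun x ⟨h, _, _⟩ => h.ne rfl⟩

/-- Every edge of `G` is contained in a matching with vertex set exactly `S`.
(When the edges of `G` lie within `S`, this says that the graph on `S` is
1-extendable.) -/
def OneExtendableOn (G : SimpleGraph V) (S : Set V) : Prop :=
  ∀ ⦃x y⦄, G.Adj x y → ∃ M : G.Subgraph, M.IsMatching ∧ M.verts = S ∧ M.Adj x y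

/-- `G` is 1-extendable: every edge lies in a perfect matching. -/
def OneExtendable (G : SimpleGraph V) : Prop :=
  OneExtendableOn G Set.univ

/-- `G` is `k`-connected: more than `k` vertices, and deleting fewer than
`k` vertices leaves a connected graph. -/
def KConnected (G : SimpleGraph V) [Fintype V] (k : ℕ) : Prop :=
  k < Fintype.card V ∧ ∀ S : Set V, S.ncard < k → (G.induce (Sᶜ : Set V)).Connected

/-- A walk is `M`-alternating if its edges alternately belong and do not
belong to `M`. -/
def IsAltWalk {G : SimpleGraph V} (M : G.Subgraph) {u v : V} (w : G.Walk u v) : Prop :=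
  (∀ (i : ℕ) (h : i < w.edges.length), (w.edges.get ⟨i, h⟩ ∈ M.edgeSet ↔ Even i)) ∨
  (∀ (i : ℕ) (h : i < w.edges.length), (w.edges.get ⟨i, h⟩ ∈ M.edgeSet ↔ Odd i))

/-- A path is `M`-alternating if every internal vertex (vertex of degree two
in the path) is incident with an edge of `M` lying on the path. -/
def IsMAltPath {G : SimpleGraph V} (M : G.Subgraph) {a b : V} (p : G.Walk a b) : Prop :=
  p.IsPath ∧ ∀ x ∈ p.support, x ≠ a → x ≠ b → ∃ y, M.Adj x y ∧ s(x, y) ∈ p.edges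

/-- An `H`-path: a path with at least one edge, both ends in `H`, and
otherwise disjoint from `H`. -/
def IsHPath {G : SimpleGraph V} (H : G.Subgraph) {a b : V} (p : G.Walk a b) : Prop :=
  0 < p.length ∧ a ∈ H.verts ∧ b ∈ H.verts ∧
  (∀ x ∈ p.support, x ≠ a → x ≠ b → x ∉ H.verts) ∧
  ∀ e ∈ p.edges, e ∉ H.edgeSet

/-- Neighborhood of a vertex set inside a subgraph `H`. -/
def nbdSetSub {G : SimpleGraph V} (H : G.Subgraph) (X : Set V) : Set V :=
  {v | v ∉ X ∧ ∃ x ∈ X, H.Adj x v}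

/-- `M` is a perfect matching of the subgraph `H`. -/
def SubgraphPM {G₀ : SimpleGraph V} (H M : G₀.Subgraph) : Prop :=
  M ≤ H ∧ M.IsMatching ∧ M.verts = H.verts

/-- `G` is a 4-sum of the subgraphs `G₁, G₂` of `G₀` along the central
circuit `C` with vertices `a, b, c, d` (in order):
`G₁ ∪ G₂ = G₀`, `G₁ ∩ G₂ = C`, each `Gᵢ` has a vertex not in the other, and
`G` is obtained from `G₀` by deleting some (possibly no) edges of `C`. -/
def IsFourSum (G G₀ : SimpleGraph V) (G₁ G₂ : G₀.Subgraph) (a b c d : V) : Prop :=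
  ([a, b, c, d] : List V).Nodup ∧
  G₀.Adj a b ∧ G₀.Adj b c ∧ G₀.Adj c d ∧ G₀.Adj d a ∧
  HasPMOn G₀ (({a, b, c, d} : Set V)ᶜ) ∧
  G₁ ⊔ G₂ = (⊤ : G₀.Subgraph) ∧
  (G₁ ⊓ G₂).verts = ({a, b, c, d} : Set V) ∧
  (∀ x y, (G₁ ⊓ G₂).Adj x y ↔
      s(x, y) ∈ ({s(a, b), s(b, c), s(c, d), s(d, a)} : Set (Sym2 V))) ∧
  (G₁.verts \ G₂.verts).Nonempty ∧ (G₂.verts \ G₁.verts).Nonempty ∧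
  (∀ x y, G.Adj x y → G₀.Adj x y) ∧
  (∀ x y, G₀.Adj x y →
      G.Adj x y ∨ s(x, y) ∈ ({s(a, b), s(b, c), s(c, d), s(d, a)} : Set (Sym2 V)))

/-- `G` contains `H`: some even subdivision of `H` (each edge replaced by an
internally disjoint path with an odd number of edges) is isomorphic to a
central subgraph of `G`. -/
def Contains (G : SimpleGraph V) (H : SimpleGraph W) : Prop :=
  ∃ (f : W → V) (p : ∀ u v : W, H.Adj u v → G.Walk (f u) (f v)),
    Function.Injective f ∧
    (∀ u v (h : H.Adj u v), (p u v h).IsPath ∧ Odd (p u v h).length) ∧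
    (∀ u v (h : H.Adj u v), p v u h.symm = (p u v h).reverse) ∧
    (∀ u v (h : H.Adj u v) (w : W), f w ∈ (p u v h).support → w = u ∨ w = v) ∧
    (∀ u v u' v' (h : H.Adj u v) (h' : H.Adj u' v'), s(u, v) ≠ s(u', v') →
      ∀ x, x ∈ (p u v h).support → x ∈ (p u' v' h').support →
        (x = f u ∨ x = f v) ∧ (x = f u' ∨ x = f v')) ∧
    HasPMOn G ((Set.range f ∪ {x | ∃ u v, ∃ h : H.Adj u v, x ∈ (p u v h).support})ᶜ)

/-- `K'` is obtained from `K` by a bicontraction: contracting both edges at a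
vertex `u` of degree two (with distinct neighbors `a` and `b`) and deleting
parallel edges. -/
def BicontractAt (K K' : (⊤ : SimpleGraph V).Subgraph) : Prop :=
  ∃ u a b : V, a ≠ b ∧ K.Adj u a ∧ K.Adj u b ∧
    (∀ x, K.Adj u x → x = a ∨ x = b) ∧
    K'.verts = K.verts \ {u, a} ∧
    ∀ x y, K'.Adj x y ↔ (x ∈ K.verts \ {u, a} ∧ y ∈ K.verts \ {u, a} ∧ x ≠ y ∧
      ∃ x' y', K.Adj x' y' ∧ (x' = x ∨ (x = b ∧ (x' = a ∨ x' = u))) ∧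
        (y' = y ∨ (y = b ∧ (y' = a ∨ y' = u))))

/-- `G` weakly contains `H`: `G` has a central subgraph `K` from which a graph
isomorphic to `H` can be obtained by a sequence of bicontractions. -/
def WeaklyContains (G : SimpleGraph V) (H : SimpleGraph W) : Prop :=
  ∃ K : (⊤ : SimpleGraph V).Subgraph,
    (∀ ⦃x y⦄, K.Adj x y → G.Adj x y) ∧
    HasPMOn G (K.vertsᶜ) ∧
    ∃ K' : (⊤ : SimpleGraph V).Subgraph,
      Relation.ReflTransGen BicontractAt K K' ∧ Nonempty (K'.coe ≃g H)

/-- The Heawood graph (LCF notation `[5, -5]⁷`): a 14-cycle together with the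
chords `{i, i+5}` for even `i`. -/
def heawood : SimpleGraph (Fin 14) :=
  SimpleGraph.fromRel (fun i j => j = i + 1 ∨ (Even (i : ℕ) ∧ j = i + 5))

/-- The digraph `D(G, M)` on the color class `A`, obtained from `G` by
directing every edge from `A` to `B` and contracting every edge of `M`. -/
def DGM (G : SimpleGraph V) (A : Set V) (M : G.Subgraph) : A → A → Prop :=
  fun a a' => ∃ b, M.Adj (↑a' : V) b ∧ G.Adj (↑a : V) b

/-- A digraph is strongly `k`-connected if deleting fewer than `k` vertices
leaves it strongly connected. -/
def StronglyKConnected {α : Type*} (D : α → α → Prop) (k : ℕ) : Prop :=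
  ∀ S : Set α, S.ncard < k → ∀ u v : α, u ∉ S → v ∉ S →
    Relation.ReflTransGen (fun x y => D x y ∧ x ∉ S ∧ y ∉ S) u v

/-- The edge `u₁u₂` of the graph with vertex set `S` obtained from `G₁` is
reducing: deleting both ends destroys 1-extendability. -/
def ReducingIn (G₁ : SimpleGraph V) (S : Set V) (u₁ u₂ : V) : Prop :=
  G₁.Adj u₁ u₂ ∧
    ¬ OneExtendableOn (restrictG G₁ (({u₁, u₂} : Set V)ᶜ)) (S \ {u₁, u₂})

/-- `G` (bipartite with bipartition `(A, B)`) is a 2-sum of `G₁` (with vertex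
set `V₁`) and `G₂` (with vertex set `V₂`) along the edge `u₁u₂`. -/
def IsTwoSum (G : SimpleGraph V) (A B : Set V) (u₁ u₂ : V)
    (G₁ G₂ : SimpleGraph V) (V₁ V₂ : Set V) : Prop :=
  u₁ ∈ A ∧ u₂ ∈ B ∧ G.Adj u₁ u₂ ∧
  ∃ X : Set V, X.Nonempty ∧ X ⊆ A \ {u₁} ∧ X ≠ A \ {u₁} ∧
    (nbdSet G X \ {u₂}).ncard = X.ncard ∧
    V₂ = ((X ∪ (nbdSet G X \ {u₂}))ᶜ : Set V) ∧
    V₁ = X ∪ (nbdSet G X \ {u₂}) ∪ {u₁, u₂} ∧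
    (∀ x y, G₁.Adj x y ↔ ((G.Adj x y ∧ x ∈ V₁ ∧ y ∈ V₁) ∨
      (x = u₁ ∧ y ∈ {w | w ∈ nbdSet G X \ {u₂} ∧ ¬ G.Adj u₁ w ∧ ∃ z, z ∉ V₁ ∧ G.Adj w z}) ∨
      (y = u₁ ∧ x ∈ {w | w ∈ nbdSet G X \ {u₂} ∧ ¬ G.Adj u₁ w ∧ ∃ z, z ∉ V₁ ∧ G.Adj w z}))) ∧
    (∀ x y, G₂.Adj x y ↔ ((G.Adj x y ∧ x ∈ V₂ ∧ y ∈ V₂) ∨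
      (x = u₂ ∧ y ∈ {w | w ∈ (A \ X) \ {u₁} ∧ ¬ G.Adj u₂ w ∧ ∃ z, z ∉ V₂ ∧ G.Adj w z}) ∨
      (y = u₂ ∧ x ∈ {w | w ∈ (A \ X) \ {u₁} ∧ ¬ G.Adj u₂ w ∧ ∃ z, z ∉ V₂ ∧ G.Adj w z})))

/-- A trisector: a set of four vertices whose deletion leaves at least three
connected components. -/
def IsTrisector (G : SimpleGraph V) (X : Set V) : Prop :=
  X.ncard = 4 ∧ 3 ≤ Nat.card (G.induce (Xᶜ : Set V)).ConnectedComponent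
section KExtAux

open Classical in
/-- Partner function of a matching. -/
noncomputable def kextPartner {G : SimpleGraph V} {M : G.Subgraph} (hM : M.IsMatching) (v : V) :
    V :=
  if hv : v ∈ M.verts then (hM hv).choose else v

open Classical in
lemma kextPartner_adj {G : SimpleGraph V} {M : G.Subgraph} (hM : M.IsMatching) {v : V}
    (hv : v ∈ M.verts) : M.Adj v (kextPartner hM v) := by
  rw [kextPartner, dif_pos hv]; exact (hM hv).choose_spec.1

open Classical in
lemma kextPartner_eq {G : SimpleGraph V} {M : G.Subgraph} (hM : M.IsMatching) {v w : V}
    (h : M.Adj v w) : kextPartner hM v = w := by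
  have hv : v ∈ M.verts := M.edge_vert h
  rw [kextPartner, dif_pos hv]
  exact ((hM hv).choose_spec.2 w h).symm

lemma kextPartner_invol {G : SimpleGraph V} {M : G.Subgraph} (hM : M.IsMatching) {v : V}
    (hv : v ∈ M.verts) : kextPartner hM (kextPartner hM v) = v :=
  kextPartner_eq hM (kextPartner_adj hM hv).symm

lemma kextPartner_injOn {G : SimpleGraph V} {M : G.Subgraph} (hM : M.IsMatching) {s : Set V}
    (hs : s ⊆ M.verts) : Set.InjOn (kextPartner hM) s := by
  intro a ha b hb h
  rw [← kextPartner_invol hM (hs ha), h, kextPartner_invol hM (hs hb)]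

lemma kext_closed_eq_univ {G : SimpleGraph V} (hconn : G.Connected) {S : Set V}
    (hne : S.Nonempty) (hcl : ∀ ⦃a b⦄, a ∈ S → G.Adj a b → b ∈ S) : S = Set.univ := by
  obtain ⟨u, hu⟩ := hne
  have key : ∀ {a b : V} (_ : G.Walk a b), a ∈ S → b ∈ S := by
    intro a b p
    induction p with
    | nil => exact id
    | cons h _ ih => exact fun ha => ih (hcl ha h)
  ext w
  simp only [Set.mem_univ, iff_true]
  obtain ⟨p⟩ := hconn.preconnected u w
  exact key p hu

end KExtAux

/-- Hall-type characterization of `k`-extendability for connected bipartite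
graphs. -/
theorem kExtendable_iff [Fintype V] (G : SimpleGraph V) (A B : Set V) (k : ℕ)
    (hconn : G.Connected) (hbip : IsBipartition G A B) :
    KExtendable G k ↔
      (A.ncard = B.ncard ∧ ∀ X : Set V, X ⊆ A → X.Nonempty →
        (X.ncard + k ≤ (nbdSet G X).ncard ∨ nbdSet G X = B)) := by
  classical
  obtain ⟨hAB, hUn, hadjAB⟩ := hbip
  have hBofA : ∀ {x y : V}, x ∈ A → G.Adj x y → y ∈ B := by
    intro x y hx h
    rcases hadjAB h with ⟨_, hy⟩ | ⟨hx', _⟩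
    · exact hy
    · exact absurd hx' (Set.disjoint_left.mp hAB hx)
  have hAofB : ∀ {x y : V}, x ∈ B → G.Adj x y → y ∈ A := by
    intro x y hx h
    rcases hadjAB h with ⟨hx', _⟩ | ⟨_, hy⟩
    · exact absurd hx (Set.disjoint_left.mp hAB hx')
    · exact hy
  constructor
  · -- necessity
    intro hext
    obtain ⟨P0, _, hP0⟩ := hext ⊥ (by intro v hv; simp at hv)
      (by simp [SimpleGraph.Subgraph.edgeSet_bot])
    have hcard : A.ncard = B.ncard := by
      refine le_antisymm ?_ ?_
      · refine Set.ncard_le_ncard_of_injOn (kextPartner hP0.1) ?_ ?_ (Set.toFinite _)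
        · intro v hvA
          exact hBofA hvA (P0.adj_sub (kextPartner_adj hP0.1 (hP0.2 v)))
        · exact kextPartner_injOn hP0.1 (fun v _ => hP0.2 v)
      · refine Set.ncard_le_ncard_of_injOn (kextPartner hP0.1) ?_ ?_ (Set.toFinite _)
        · intro v hvB
          exact hAofB hvB (P0.adj_sub (kextPartner_adj hP0.1 (hP0.2 v)))
        · exact kextPartner_injOn hP0.1 (fun v _ => hP0.2 v)
    refine ⟨hcard, ?_⟩
    intro X hXA hXne
    by_contra hcon
    push_neg at hcon
    obtain ⟨hsmall, hNne⟩ := hcon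
    set N : Set V := nbdSet G X with hN
    have hNB : N ⊆ B := by
      rintro v ⟨hvX, x, hxX, hadj⟩
      exact hBofA (hXA hxX) hadj
    obtain ⟨b, hbB, hbN⟩ : ∃ b, b ∈ B ∧ b ∉ N := by
      by_contra h
      push_neg at h
      exact hNne (Set.Subset.antisymm hNB h)
    -- any perfect matching injects X into N
    have key : ∀ (P : G.Subgraph) (hP : P.IsPerfectMatching),
        Set.InjOn (kextPartner hP.1) X ∧ ∀ x ∈ X, kextPartner hP.1 x ∈ N := by
      intro P hP
      refine ⟨kextPartner_injOn hP.1 (fun v _ => hP.2 v), ?_⟩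
      intro x hx
      have hadj : G.Adj x (kextPartner hP.1 x) := P.adj_sub (kextPartner_adj hP.1 (hP.2 x))
      have hB : kextPartner hP.1 x ∈ B := hBofA (hXA hx) hadj
      exact ⟨fun hmem => Set.disjoint_left.mp hAB (hXA hmem) hB, x, hx, hadj⟩
    have hXN : X.ncard ≤ N.ncard :=
      Set.ncard_le_ncard_of_injOn _ (key P0 hP0).2 (key P0 hP0).1 (Set.toFinite _)
    have hX1 : 1 ≤ X.ncard := (Set.ncard_pos (Set.toFinite _)).mpr hXne
    have hk1 : 1 ≤ k := by omega
    haveI : Fintype ↥N := (Set.toFinite N).fintype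
    set T : ↥N → Finset (V ⊕ ℕ) := fun y =>
      (Finset.univ.filter fun a : V => a ∉ X ∧ G.Adj ↑y a).image Sum.inl ∪
        (Finset.range (X.ncard - 1)).image Sum.inr with hT
    by_cases hSDR : ∀ s : Finset ↥N, s.card ≤ (s.biUnion T).card
    · -- an SDR exists: build a blocking matching of size N.ncard - X.ncard + 1
      obtain ⟨f, hfinj, hfT⟩ :=
        (Finset.all_card_le_biUnion_card_iff_exists_injective T).mp hSDR
      set R : Finset ↥N := Finset.univ.filter (fun y => (f y).isLeft) with hR
      have hcount : (Finset.univ : Finset ↥N).card ≤ R.card + (X.ncard - 1) := by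
        have h1 : (Finset.univ \ R).card ≤ (X.ncard - 1) := by
          have hmapped : ∀ y ∈ Finset.univ \ R,
              f y ∈ (Finset.range (X.ncard - 1)).image Sum.inr := by
            intro y hy
            rw [Finset.mem_sdiff, hR, Finset.mem_filter] at hy
            have hyT := hfT y
            rw [hT, Finset.mem_union] at hyT
            rcases hyT with hyT | hyT
            · exfalso
              obtain ⟨a, _, ha⟩ := Finset.mem_image.mp hyT
              exact hy.2 ⟨Finset.mem_univ _, by rw [← ha]; rfl⟩
            · exact hyT
          calc (Finset.univ \ R).card ≤ ((Finset.range (X.ncard - 1)).image Sum.inr).card :=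
              Finset.card_le_card_of_injOn f hmapped (fun x _ y _ h => hfinj h)
            _ ≤ (Finset.range (X.ncard - 1)).card := Finset.card_image_le
            _ = X.ncard - 1 := Finset.card_range _
        have h2 := Finset.card_sdiff_of_subset (Finset.subset_univ R)
        omega
      have hunivN : (Finset.univ : Finset ↥N).card = N.ncard := by
        rw [Finset.card_univ, ← Nat.card_coe_set_eq, Nat.card_eq_fintype_card]
      set t1 := N.ncard - X.ncard + 1 with ht1
      have ht1k : t1 ≤ k := by omega
      have ht1R : t1 ≤ R.card := by omega
      obtain ⟨T2, hT2R, hT2card⟩ := Finset.exists_subset_card_eq ht1R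
      set g : ↥N → V := fun y => Sum.elim id (fun _ => b) (f y) with hg'
      have hg : ∀ y ∈ T2, G.Adj ↑y (g y) ∧ g y ∉ X ∧ f y = Sum.inl (g y) := by
        intro y hy
        have hyR := hT2R hy
        rw [hR, Finset.mem_filter] at hyR
        have hyT := hfT y
        rw [hT, Finset.mem_union] at hyT
        rcases hyT with hyT | hyT
        · obtain ⟨a, haf, hae⟩ := Finset.mem_image.mp hyT
          rw [Finset.mem_filter] at haf
          have hgy : g y = a := by simp only [hg', ← hae, Sum.elim_inl, id]
          exact ⟨hgy ▸ haf.2.2, hgy ▸ haf.2.1, by rw [hgy, ← hae]⟩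
        · exfalso
          obtain ⟨j, _, hje⟩ := Finset.mem_image.mp hyT
          rw [← hje] at hyR
          exact Bool.noConfusion hyR.2
      have hginj : Set.InjOn g ↑T2 := by
        intro y hy y' hy' h
        exact hfinj (by rw [(hg y (Finset.mem_coe.mp hy)).2.2,
          (hg y' (Finset.mem_coe.mp hy')).2.2, h])
      have hgA : ∀ y ∈ T2, g y ∈ A := fun y hy => hAofB (hNB y.2) (hg y hy).1
      have hyB : ∀ y : ↥N, (↑y : V) ∈ B := fun y => hNB y.2
      set M1 : G.Subgraph := {
        verts := {v | ∃ y ∈ T2, v = ↑y ∨ v = g y}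
        Adj := fun u w => ∃ y ∈ T2, (u = ↑y ∧ w = g y) ∨ (u = g y ∧ w = ↑y)
        adj_sub := by
          rintro u w ⟨y, hy, ⟨rfl, rfl⟩ | ⟨rfl, rfl⟩⟩
          · exact (hg y hy).1
          · exact ((hg y hy).1).symm
        edge_vert := by
          rintro u w ⟨y, hy, ⟨rfl, _⟩ | ⟨rfl, _⟩⟩
          · exact ⟨y, hy, Or.inl rfl⟩
          · exact ⟨y, hy, Or.inr rfl⟩
        symm := by
          constructor
          rintro u w ⟨y, hy, ⟨h1, h2⟩ | ⟨h1, h2⟩⟩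
          · exact ⟨y, hy, Or.inr ⟨h2, h1⟩⟩
          · exact ⟨y, hy, Or.inl ⟨h2, h1⟩⟩ } with hM1
      have hMatch : M1.IsMatching := by
        rintro v ⟨y, hy, hv | hv⟩
        · subst hv
          refine ⟨g y, ⟨y, hy, Or.inl ⟨rfl, rfl⟩⟩, ?_⟩
          rintro w ⟨y', hy', ⟨h1, rfl⟩ | ⟨h1, rfl⟩⟩
          · have : y = y' := Subtype.ext h1
            rw [← this]
          · exfalso
            exact Set.disjoint_left.mp hAB (h1 ▸ hgA y' hy') (hyB y)
        · subst hv
          refine ⟨↑y, ⟨y, hy, Or.inr ⟨rfl, rfl⟩⟩, ?_⟩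
          rintro w ⟨y', hy', ⟨h1, rfl⟩ | ⟨h1, rfl⟩⟩
          · exfalso
            exact Set.disjoint_left.mp hAB (hgA y hy) (h1 ▸ hyB y')
          · have : y' = y := hginj (Finset.mem_coe.mpr hy') (Finset.mem_coe.mpr hy) h1.symm
            rw [this]
      have hedge : M1.edgeSet.ncard ≤ k := by
        have hsub : M1.edgeSet ⊆ (fun y : ↥N => s(↑y, g y)) '' ↑T2 := by
          intro e he
          induction e using Sym2.ind with
          | _ u w =>
            rw [SimpleGraph.Subgraph.mem_edgeSet] at he
            obtain ⟨y, hy, ⟨rfl, rfl⟩ | ⟨rfl, rfl⟩⟩ := he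
            · exact ⟨y, hy, rfl⟩
            · exact ⟨y, hy, Sym2.eq_swap⟩
        calc M1.edgeSet.ncard ≤ ((fun y : ↥N => s(↑y, g y)) '' ↑T2).ncard :=
            Set.ncard_le_ncard hsub (Set.toFinite _)
          _ ≤ (↑T2 : Set ↥N).ncard := Set.ncard_image_le (Set.toFinite _)
          _ = t1 := by rw [Set.ncard_coe_finset, hT2card]
          _ ≤ k := ht1k
      obtain ⟨P1, hMP1, hP1⟩ := hext M1 hMatch hedge
      set Sy : Set V := Subtype.val '' (↑T2 : Set ↥N) with hSy
      have hSyN : Sy ⊆ N := by rintro _ ⟨y, _, rfl⟩; exact y.2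
      have hSycard : Sy.ncard = t1 := by
        rw [hSy, Set.ncard_image_of_injOn Subtype.val_injective.injOn,
          Set.ncard_coe_finset, hT2card]
      have hmaps : ∀ x ∈ X, kextPartner hP1.1 x ∈ N \ Sy := by
        intro x hx
        refine ⟨(key P1 hP1).2 x hx, ?_⟩
        rintro ⟨y, hyT2, hval⟩
        have hyT2' : y ∈ T2 := Finset.mem_coe.mp hyT2
        have h1 : P1.Adj (g y) ↑y := hMP1.2 ⟨y, hyT2', Or.inr ⟨rfl, rfl⟩⟩
        have h2 : P1.Adj x ↑y := by
          rw [hval]; exact kextPartner_adj hP1.1 (hP1.2 x)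
        have hx1 : x = g y :=
          (kextPartner_eq hP1.1 h2.symm).symm.trans (kextPartner_eq hP1.1 h1.symm)
        exact (hg y hyT2').2.1 (hx1 ▸ hx)
      have hle : X.ncard ≤ (N \ Sy).ncard :=
        Set.ncard_le_ncard_of_injOn _ hmaps (key P1 hP1).1 (Set.toFinite _)
      have hdiff : (N \ Sy).ncard + Sy.ncard = N.ncard :=
        Set.ncard_diff_add_ncard_of_subset hSyN (Set.toFinite _)
      omega
    · -- defect case
      push_neg at hSDR
      obtain ⟨s, hs⟩ := hSDR
      have hsne : s.Nonempty := by
        rcases s.eq_empty_or_nonempty with rfl | h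
        · simp at hs
        · exact h
      set S : Set V := Subtype.val '' (↑s : Set ↥N) with hS
      have hSN : S ⊆ N := by rintro _ ⟨y, _, rfl⟩; exact y.2
      have hSB : S ⊆ B := hSN.trans hNB
      have hScard : S.ncard = s.card := by
        rw [hS, Set.ncard_image_of_injOn Subtype.val_injective.injOn, Set.ncard_coe_finset]
      set CA : Set V := {a | a ∉ X ∧ ∃ y ∈ S, G.Adj y a} with hCA
      have hCAA : CA ⊆ A := by
        rintro a ⟨haX, y, hyS, hadj⟩
        exact hAofB (hSB hyS) hadj
      have hsubC : ((Set.toFinite CA).toFinset.image Sum.inl ∪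
          (Finset.range (X.ncard - 1)).image Sum.inr : Finset (V ⊕ ℕ)) ⊆ s.biUnion T := by
        intro e he
        rw [Finset.mem_union] at he
        rcases he with he | he
        · obtain ⟨a, ha, rfl⟩ := Finset.mem_image.mp he
          rw [Set.Finite.mem_toFinset] at ha
          obtain ⟨haX, y, hyS, hadj⟩ := ha
          obtain ⟨y0, hy0, rfl⟩ := hyS
          rw [Finset.mem_biUnion]
          refine ⟨y0, Finset.mem_coe.mp hy0, ?_⟩
          rw [hT, Finset.mem_union]
          exact Or.inl (Finset.mem_image.mpr ⟨a,
            Finset.mem_filter.mpr ⟨Finset.mem_univ _, haX, hadj⟩, rfl⟩)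
        · obtain ⟨y0, hy0⟩ := hsne
          rw [Finset.mem_biUnion]
          refine ⟨y0, hy0, ?_⟩
          rw [hT, Finset.mem_union]
          exact Or.inr he
      have hcountC : CA.ncard + (X.ncard - 1) ≤ (s.biUnion T).card := by
        have hdisj : Disjoint ((Set.toFinite CA).toFinset.image Sum.inl)
            ((Finset.range (X.ncard - 1)).image Sum.inr) := by
          rw [Finset.disjoint_left]
          rintro e he1 he2
          obtain ⟨a, _, rfl⟩ := Finset.mem_image.mp he1
          obtain ⟨j, _, hj⟩ := Finset.mem_image.mp he2
          cases hj
        have := Finset.card_le_card hsubC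
        rw [Finset.card_union_of_disjoint hdisj,
          Finset.card_image_of_injective _ Sum.inl_injective,
          Finset.card_image_of_injective _ Sum.inr_injective,
          Finset.card_range] at this
        rw [Set.ncard_eq_toFinset_card _ (Set.toFinite CA)]
        exact this
      have hkey : CA.ncard + X.ncard ≤ S.ncard := by omega
      set D : Set V := X ∪ CA with hD
      have hDA : D ⊆ A := Set.union_subset hXA hCAA
      have hDcard : D.ncard ≤ S.ncard :=
        le_trans (Set.ncard_union_le _ _) (by omega)
      have hnbW : ∀ y ∈ S, ∀ a, G.Adj y a → a ∈ D := by
        intro y hyS a hadj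
        by_cases haX : a ∈ X
        · exact Or.inl haX
        · exact Or.inr ⟨haX, y, hyS, hadj⟩
      by_cases hDN : ∀ d ∈ D, ∀ w, G.Adj d w → w ∈ S
      · have huniv : D ∪ S = Set.univ := by
          refine kext_closed_eq_univ hconn ⟨hXne.choose, Or.inl (Or.inl hXne.choose_spec)⟩ ?_
          rintro u w (hu | hu) hadj
          · exact Or.inr (hDN u hu w hadj)
          · exact Or.inl (hnbW u hu w hadj)
        have hb2 : b ∈ D ∪ S := huniv ▸ Set.mem_univ b
        rcases hb2 with hb2 | hb2
        · exact Set.disjoint_left.mp hAB (hDA hb2) hbB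
        · exact hbN (hSN hb2)
      · push_neg at hDN
        obtain ⟨d, hdD, w, hadj, hwS⟩ := hDN
        obtain ⟨P2, hMP2, hP2⟩ := hext (G.subgraphOfAdj hadj)
          (SimpleGraph.Subgraph.IsMatching.subgraphOfAdj hadj)
          (by rw [SimpleGraph.edgeSet_subgraphOfAdj]; simpa using hk1)
        have hinj : Set.InjOn (kextPartner hP2.1) S :=
          kextPartner_injOn hP2.1 (fun v _ => hP2.2 v)
        have hmaps : ∀ y ∈ S, kextPartner hP2.1 y ∈ D := fun y hy =>
          hnbW y hy _ (P2.adj_sub (kextPartner_adj hP2.1 (hP2.2 y)))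
        have him : kextPartner hP2.1 '' S = D := by
          refine Set.eq_of_subset_of_ncard_le ?_ ?_ (Set.toFinite _)
          · rintro _ ⟨y, hy, rfl⟩
            exact hmaps y hy
          · rw [Set.ncard_image_of_injOn hinj]
            exact hDcard
        obtain ⟨y, hyS, hyd⟩ := him ▸ hdD
        have h1 : P2.Adj d w := hMP2.2 (by simp)
        have h2 : P2.Adj d y := by
          rw [← hyd]
          exact (kextPartner_adj hP2.1 (hP2.2 y)).symm
        have : w = y := by
          rw [← kextPartner_eq hP2.1 h1, kextPartner_eq hP2.1 h2]
        exact hwS (this ▸ hyS)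
  · -- sufficiency
    rintro ⟨hcard, hHall⟩ M hM hMk
    have hqadj : ∀ {v : V}, v ∈ M.verts → M.Adj v (kextPartner hM v) :=
      fun hv => kextPartner_adj hM hv
    set q := kextPartner hM with hq
    have hqvert : ∀ {v : V}, v ∈ M.verts → q v ∈ M.verts :=
      fun hv => M.edge_vert (hqadj hv).symm
    set MA : Set V := M.verts ∩ A with hMA
    set MB : Set V := M.verts ∩ B with hMB
    -- partner maps MA into MB and vice versa, bijectively
    have hqAB : ∀ v ∈ MA, q v ∈ MB := by
      rintro v ⟨hv, hvA⟩
      exact ⟨hqvert hv, hBofA hvA (M.adj_sub (hqadj hv))⟩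
    have hqBA : ∀ v ∈ MB, q v ∈ MA := by
      rintro v ⟨hv, hvB⟩
      exact ⟨hqvert hv, hAofB hvB (M.adj_sub (hqadj hv))⟩
    have hMAB : MA.ncard = MB.ncard := by
      refine le_antisymm ?_ ?_
      · exact Set.ncard_le_ncard_of_injOn q hqAB
          (kextPartner_injOn hM (fun v hv => hv.1)) (Set.toFinite _)
      · exact Set.ncard_le_ncard_of_injOn q hqBA
          (kextPartner_injOn hM (fun v hv => hv.1)) (Set.toFinite _)
    have hMBk : MB.ncard ≤ k := by
      refine le_trans (Set.ncard_le_ncard_of_injOn (fun v => s(v, q v)) ?_ ?_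
        (Set.toFinite _)) hMk
      · rintro v ⟨hv, _⟩
        exact SimpleGraph.Subgraph.mem_edgeSet.mpr (hqadj hv)
      · rintro v ⟨hv, hvB⟩ w ⟨hw, hwB⟩ hvw
        simp only [Sym2.eq, Sym2.rel_iff', Prod.mk.injEq, Prod.swap_prod_mk] at hvw
        rcases hvw with ⟨h1, _⟩ | ⟨h1, h2⟩
        · exact h1
        · exfalso
          have : q w ∈ A := hAofB hwB (M.adj_sub (hqadj hw))
          exact Set.disjoint_left.mp hAB (h1 ▸ this) hvB
    set A' : Set V := A \ M.verts with hA'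
    set B' : Set V := B \ M.verts with hB'
    have hA'card : A'.ncard + MA.ncard = A.ncard := by
      have : A \ MA = A' := by
        ext v; simp only [hA', Set.mem_diff, hMA, Set.mem_inter_iff]; tauto
      rw [← this]
      exact Set.ncard_diff_add_ncard_of_subset Set.inter_subset_right (Set.toFinite _)
    have hB'card : B'.ncard + MB.ncard = B.ncard := by
      have : B \ MB = B' := by
        ext v; simp only [hB', Set.mem_diff, hMB, Set.mem_inter_iff]; tauto
      rw [← this]
      exact Set.ncard_diff_add_ncard_of_subset Set.inter_subset_right (Set.toFinite _)
    have hA'B' : A'.ncard = B'.ncard := by omega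
    -- Hall's condition for the reduced graph
    set T : A' → Finset V := fun a => Finset.univ.filter (fun w => w ∈ B' ∧ G.Adj ↑a w) with hT
    have hHallCond : ∀ s : Finset A', s.card ≤ (s.biUnion T).card := by
      intro s
      rcases s.eq_empty_or_nonempty with rfl | hs
      · simp
      set S : Set V := Subtype.val '' (↑s : Set A') with hS
      have hScard : S.ncard = s.card := by
        rw [hS, Set.ncard_image_of_injOn Subtype.val_injective.injOn, Set.ncard_coe_finset]
      have hSA' : S ⊆ A' := by rintro _ ⟨a, _, rfl⟩; exact a.2
      have hSA : S ⊆ A := hSA'.trans Set.diff_subset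
      have hSne : S.Nonempty := by
        obtain ⟨a, ha⟩ := hs
        exact ⟨↑a, ⟨a, ha, rfl⟩⟩
      have hmemB : ∀ w ∈ nbdSet G S, w ∈ B := by
        rintro w ⟨_, x, hxS, hadj⟩
        exact hBofA (hSA hxS) hadj
      rcases hHall S hSA hSne with hbig | hallB
      · have hsub : nbdSet G S \ M.verts ⊆ ↑(s.biUnion T) := by
          rintro w ⟨hw, hwM⟩
          obtain ⟨hwS, x, hxS, hadj⟩ := hw
          obtain ⟨a, ha, rfl⟩ := hxS
          rw [Finset.mem_coe, Finset.mem_biUnion]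
          refine ⟨a, ha, ?_⟩
          rw [hT, Finset.mem_filter]
          exact ⟨Finset.mem_univ _, ⟨hmemB w ⟨hwS, ↑a, ⟨a, ha, rfl⟩, hadj⟩, hwM⟩, hadj⟩
        have h1 : (nbdSet G S \ M.verts).ncard ≤ (s.biUnion T).card := by
          rw [← Set.ncard_coe_finset]
          exact Set.ncard_le_ncard hsub (Set.toFinite _)
        have h2 : nbdSet G S ⊆ (nbdSet G S \ M.verts) ∪ MB := by
          intro w hw
          by_cases hwM : w ∈ M.verts
          · exact Or.inr ⟨hwM, hmemB w hw⟩
          · exact Or.inl ⟨hw, hwM⟩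
        have h3 : (nbdSet G S).ncard ≤ (nbdSet G S \ M.verts).ncard + MB.ncard :=
          le_trans (Set.ncard_le_ncard h2 (Set.toFinite _)) (Set.ncard_union_le _ _)
        omega
      · have hsub : B' ⊆ ↑(s.biUnion T) := by
          intro w hw
          have hwN : w ∈ nbdSet G S := hallB ▸ hw.1
          obtain ⟨hwS, x, hxS, hadj⟩ := hwN
          obtain ⟨a, ha, rfl⟩ := hxS
          rw [Finset.mem_coe, Finset.mem_biUnion]
          refine ⟨a, ha, ?_⟩
          rw [hT, Finset.mem_filter]
          exact ⟨Finset.mem_univ _, hw, hadj⟩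
        have h1 : B'.ncard ≤ (s.biUnion T).card := by
          rw [← Set.ncard_coe_finset]
          exact Set.ncard_le_ncard hsub (Set.toFinite _)
        have h2 : S.ncard ≤ A'.ncard := Set.ncard_le_ncard hSA' (Set.toFinite _)
        omega
    obtain ⟨f, hfinj, hfT⟩ := (Finset.all_card_le_biUnion_card_iff_exists_injective T).mp hHallCond
    have hfspec : ∀ a : A', f a ∈ B' ∧ G.Adj ↑a (f a) := by
      intro a
      have := hfT a
      rw [hT, Finset.mem_filter] at this
      exact this.2
    have hfsurj : ∀ w ∈ B', ∃ a : A', f a = w := by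
      have hrange : Set.range f = B' := by
        refine Set.eq_of_subset_of_ncard_le ?_ ?_ (Set.toFinite _)
        · rintro _ ⟨a, rfl⟩; exact (hfspec a).1
        · have : (Set.range f).ncard = A'.ncard := by
            rw [← Set.image_univ, Set.ncard_image_of_injOn hfinj.injOn, Set.ncard_univ,
              Nat.card_coe_set_eq]
          omega
      intro w hw
      rw [← hrange] at hw
      exact hw
    set P : G.Subgraph := {
      verts := Set.univ
      Adj := fun x y => M.Adj x y ∨ (∃ a : A', ↑a = x ∧ f a = y) ∨ (∃ a : A', ↑a = y ∧ f a = x)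
      adj_sub := by
        rintro x y (h | ⟨a, rfl, rfl⟩ | ⟨a, rfl, rfl⟩)
        · exact M.adj_sub h
        · exact (hfspec a).2
        · exact (hfspec a).2.symm
      edge_vert := fun _ => Set.mem_univ _
      symm := by
        constructor
        rintro x y (h | h | h)
        · exact Or.inl h.symm
        · exact Or.inr (Or.inr h)
        · exact Or.inr (Or.inl h) } with hP
    have hPadj : ∀ {x y : V}, P.Adj x y ↔
        (M.Adj x y ∨ (∃ a : A', ↑a = x ∧ f a = y) ∨ (∃ a : A', ↑a = y ∧ f a = x)) := Iff.rfl
    refine ⟨P, ⟨Set.subset_univ _, fun x y h => Or.inl h⟩, ?_, fun v => Set.mem_univ v⟩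
    intro v _
    by_cases hv : v ∈ M.verts
    · refine ⟨q v, Or.inl (hqadj hv), ?_⟩
      rintro w (h | ⟨a, ha, rfl⟩ | ⟨a, ha, hfa⟩)
      · exact (kextPartner_eq hM h).symm
      · exact absurd hv (ha ▸ a.2.2)
      · exact absurd hv (hfa ▸ ((hfspec a).1.2))
    · have hvAB : v ∈ A ∨ v ∈ B := by
        have : v ∈ A ∪ B := hUn ▸ Set.mem_univ v
        exact this
      rcases hvAB with hvA | hvB
      · set a : A' := ⟨v, hvA, hv⟩ with ha
        refine ⟨f a, Or.inr (Or.inl ⟨a, rfl, rfl⟩), ?_⟩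
        rintro w (h | ⟨a', ha', rfl⟩ | ⟨a', ha', hfa'⟩)
        · exact absurd (M.edge_vert h) hv
        · have : a' = a := Subtype.ext ha'
          rw [this]
        · exfalso
          exact Set.disjoint_left.mp hAB hvA (hfa' ▸ (hfspec a').1.1)
      · obtain ⟨a, hfa⟩ := hfsurj v ⟨hvB, hv⟩
        refine ⟨↑a, Or.inr (Or.inr ⟨a, rfl, hfa⟩), ?_⟩
        rintro w (h | ⟨a', ha', hfa'⟩ | ⟨a', ha', hfa'⟩)
        · exact absurd (M.edge_vert h) hv
        · exfalso
          exact Set.disjoint_left.mp hAB (ha' ▸ a'.2.1) hvB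
        · have : a' = a := hfinj (hfa'.trans hfa.symm)
          rw [← ha', this]
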